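/- arXiv:1704.04939 — 5 statements merged into one kernel-verified Lean document; each statement's English description precedes it below -/
import Mathlib

section
/- For each j ∈ ℕ let G_j be a locally compact Hausdorff second countable topological space and let p_j : G_{j+1} → G_j be a continuous proper map. Then the inverse limit Ḡ is a locally compact Hausdorff second countable topological space. -/
/-- The inverse limit of an inverse sequence of topological spaces, as a subspace of the
product space. -/
abbrev InverseLimit (G : ℕ → Type*) (p : ∀ j, G (j + 1) → G j) : Type _ :=
  { x : ∀ j, G j // ∀ j, p j (x (j + 1)) = x j }

/-- If each `G j` is a locally compact Hausdorff second countable space and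
each bonding map `p j : G (j+1) → G j` is continuous and proper (preimages of compact sets
are compact), then the inverse limit is locally compact, Hausdorff and second countable. -/
theorem inverseLimit_locallyCompact_t2_secondCountable
    (G : ℕ → Type*) [∀ j, TopologicalSpace (G j)]
    [∀ j, LocallyCompactSpace (G j)] [∀ j, T2Space (G j)]
    [∀ j, SecondCountableTopology (G j)]
    (p : ∀ j, G (j + 1) → G j) (hpc : ∀ j, Continuous (p j))
    (hpp : ∀ j, ∀ K : Set (G j), IsCompact K → IsCompact (p j ⁻¹' K)) :
    LocallyCompactSpace (InverseLimit G p) ∧ T2Space (InverseLimit G p) ∧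
      SecondCountableTopology (InverseLimit G p) := by
  -- composite maps q j : G j → G 0
  classical
  let q : ∀ j, G j → G 0 := fun j => Nat.rec id (fun j qj => qj ∘ p j) j
  have hq0 : q 0 = id := rfl
  have hqsucc : ∀ j, q (j + 1) = q j ∘ p j := fun j => rfl
  have hqc : ∀ j, Continuous (q j) := by
    intro j
    induction j with
    | zero => exact continuous_id
    | succ j ih => rw [hqsucc]; exact ih.comp (hpc j)
  have hqp : ∀ j (K : Set (G 0)), IsCompact K → IsCompact (q j ⁻¹' K) := by
    intro j K hK
    induction j with
    | zero => simpa [hq0] using hK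
    | succ j ih =>
      rw [hqsucc, Set.preimage_comp]
      exact hpp j _ ih
  -- compatibility along the limit
  have hcomm : ∀ (x : InverseLimit G p) j, q j (x.1 j) = x.1 0 := by
    intro x j
    induction j with
    | zero => rfl
    | succ j ih => rw [hqsucc]; simp only [Function.comp_apply, x.2 j]; exact ih
  have hwlc : WeaklyLocallyCompactSpace (InverseLimit G p) := by
    constructor
    intro x
    obtain ⟨K, hKc, hKn⟩ := exists_compact_mem_nhds (x.1 0)
    refine ⟨(fun y : InverseLimit G p => y.1 0) ⁻¹' K, ?_, ?_⟩
    · -- compactness via the embedding into the product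
      have hemb : Topology.IsInducing (Subtype.val : InverseLimit G p → ∀ j, G j) :=
        Topology.IsInducing.subtypeVal
      rw [hemb.isCompact_iff]
      have hclosed : IsClosed (Subtype.val '' ((fun y : InverseLimit G p => y.1 0) ⁻¹' K)) := by
        have : Subtype.val '' ((fun y : InverseLimit G p => y.1 0) ⁻¹' K) =
            {x : ∀ j, G j | ∀ j, p j (x (j + 1)) = x j} ∩ {x : ∀ j, G j | x 0 ∈ K} := by
          ext z
          constructor
          · rintro ⟨y, hy, rfl⟩
            exact ⟨y.2, hy⟩
          · rintro ⟨h1, h2⟩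
            exact ⟨⟨z, h1⟩, h2, rfl⟩
        rw [this]
        refine IsClosed.inter ?_ ?_
        · have : {x : ∀ j, G j | ∀ j, p j (x (j + 1)) = x j} =
              ⋂ j, {x : ∀ j, G j | p j (x (j + 1)) = x j} := by
            ext z; simp
          rw [this]
          refine isClosed_iInter fun j => isClosed_eq ?_ ?_
          · exact (hpc j).comp (continuous_apply (j + 1))
          · exact continuous_apply j
        · exact hKc.isClosed.preimage (continuous_apply 0)
      have hsub : Subtype.val '' ((fun y : InverseLimit G p => y.1 0) ⁻¹' K) ⊆
          Set.pi Set.univ (fun j => q j ⁻¹' K) := by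
        rintro z ⟨y, hy, rfl⟩ j _
        show q j (y.1 j) ∈ K
        rw [hcomm y j]
        exact hy
      exact (isCompact_univ_pi fun j => hqp j K hKc).of_isClosed_subset hclosed hsub
    · exact ContinuousAt.preimage_mem_nhds
        ((continuous_apply 0).comp continuous_subtype_val).continuousAt hKn
  haveI : SecondCountableTopology (InverseLimit G p) :=
    TopologicalSpace.secondCountableTopology_induced _ _ (Subtype.val : InverseLimit G p → ∀ j, G j)
  exact ⟨inferInstance, inferInstance, inferInstance⟩
end

section
/- For each j ∈ ℕ let G_j be a locally compact Hausdorff topological space and let p_j : G_{j+1} → G_j be a continuous proper map. Then for every compactly supported continuous function f : Ḡ → ℂ on the inverse limit Ḡ there exists a compact set K ⊆ Ḡ containing the support of f such that for every ε > 0 there exist j ∈ ℕ and a compactly supported continuous function g : G_j → ℂ with the support of g ∘ p_j^∞ contained in K and sup_{x ∈ Ḡ} |f(x) − g(p_j^∞(x))| < ε. In other words, the union over j of the pullbacks of C_c(G_j) under the projections is dense in C_c(Ḡ) in the inductive limit topology. -/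
open Set

section Aux

set_option linter.unusedSectionVars false
variable {G : ℕ → Type*} [∀ j, TopologicalSpace (G j)] (p : ∀ j, G (j + 1) → G j)

/-- Composite bonding map from level `j + n` down to level `j`. -/
def stepDown (j : ℕ) : ∀ n, G (j + n) → G j
  | 0 => id
  | n + 1 => fun x => stepDown j n (p (j + n) x)

lemma stepDown_apply (j : ℕ) {x : ∀ j, G j} (hx : ∀ j, p j (x (j + 1)) = x j) :
    ∀ n, stepDown p j n (x (j + n)) = x j
  | 0 => rfl
  | n + 1 => by
    show stepDown p j n (p (j + n) (x ((j + n) + 1))) = x j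
    rw [hx (j + n)]
    exact stepDown_apply j hx n

lemma stepDown_continuous (hpc : ∀ j, Continuous (p j)) (j : ℕ) :
    ∀ n, Continuous (stepDown p j n : G (j + n) → G j)
  | 0 => continuous_id
  | n + 1 => (stepDown_continuous hpc j n).comp (hpc (j + n))

/-- Composite bonding map from level `j` down to level `0`. -/
def toZero : ∀ j, G j → G 0
  | 0 => id
  | j + 1 => fun x => toZero j (p j x)

lemma toZero_apply {x : ∀ j, G j} (hx : ∀ j, p j (x (j + 1)) = x j) :
    ∀ j, toZero p j (x j) = x 0
  | 0 => rfl
  | j + 1 => by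
    show toZero p j (p j (x (j + 1))) = x 0
    rw [hx j]
    exact toZero_apply hx j

lemma toZero_continuous (hpc : ∀ j, Continuous (p j)) :
    ∀ j, Continuous (toZero p j)
  | 0 => continuous_id
  | j + 1 => (toZero_continuous hpc j).comp (hpc j)

lemma toZero_proper (hpp : ∀ j, ∀ K : Set (G j), IsCompact K → IsCompact (p j ⁻¹' K))
    {K : Set (G 0)} (hK : IsCompact K) :
    ∀ j, IsCompact (toZero p j ⁻¹' K)
  | 0 => hK
  | j + 1 => hpp j _ (toZero_proper hpp hK j)

lemma lift_to (hpc : ∀ j, Continuous (p j)) {j k : ℕ} (h : j ≤ k) (g : G j → ℂ)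
    (hg : Continuous g) :
    ∃ g' : G k → ℂ, Continuous g' ∧ ∀ x : InverseLimit G p, g' (x.1 k) = g (x.1 j) := by
  obtain ⟨n, rfl⟩ := Nat.exists_eq_add_of_le h
  exact ⟨g ∘ stepDown p j n, hg.comp (stepDown_continuous p hpc j n),
    fun x => congrArg g (stepDown_apply p j x.2 n)⟩

end Aux

/-- For an inverse sequence of locally compact Hausdorff spaces with
continuous proper bonding maps, every compactly supported continuous function `f` on the
inverse limit can be approximated, uniformly and with supports inside one fixed compact set
containing the support of `f`, by pullbacks of compactly supported continuous functions on
the spaces `G j` under the canonical projections.  In other words,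
`⋃ j (p_j^∞)^* (C_c(G_j))` is dense in `C_c(Ḡ)` in the inductive limit topology. -/
theorem inverseLimit_pullbacks_dense_inductiveLimitTopology
    (G : ℕ → Type*) [∀ j, TopologicalSpace (G j)]
    [∀ j, LocallyCompactSpace (G j)] [∀ j, T2Space (G j)]
    (p : ∀ j, G (j + 1) → G j) (hpc : ∀ j, Continuous (p j))
    (hpp : ∀ j, ∀ K : Set (G j), IsCompact K → IsCompact (p j ⁻¹' K))
    (f : InverseLimit G p → ℂ) (hf : Continuous f) (hfsupp : HasCompactSupport f) :
    ∃ K : Set (InverseLimit G p), IsCompact K ∧ tsupport f ⊆ K ∧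
      ∀ ε > (0 : ℝ), ∃ (j : ℕ) (g : G j → ℂ), Continuous g ∧ HasCompactSupport g ∧
        tsupport (fun x : InverseLimit G p => g (x.1 j)) ⊆ K ∧
        ∀ x : InverseLimit G p, ‖f x - g (x.1 j)‖ < ε := by
  have hproj : ∀ j, Continuous fun x : InverseLimit G p => x.1 j :=
    fun j => (continuous_apply j).comp continuous_subtype_val
  -- a compactly supported bump equal to 1 on the 0-th projection of the support of f
  have hC0 : IsCompact ((fun x : InverseLimit G p => x.1 0) '' tsupport f) :=
    hfsupp.image (hproj 0)
  obtain ⟨χ, hχ1, -, hχsupp, hχrange⟩ :=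
    exists_continuous_one_zero_of_isCompact hC0 isClosed_empty (disjoint_empty _)
  set T : Set (G 0) := tsupport χ with hT
  have hTclosed : IsClosed T := isClosed_tsupport _
  set K : Set (InverseLimit G p) := {x | x.1 0 ∈ T} with hKdef
  have hKclosed : IsClosed K := hTclosed.preimage (hproj 0)
  -- K is compact
  have hK : IsCompact K := by
    rw [Subtype.isCompact_iff]
    have himg : Subtype.val '' K =
        {y : ∀ j, G j | (∀ j, p j (y (j + 1)) = y j) ∧ y 0 ∈ T} := by
      ext y
      constructor
      · rintro ⟨⟨y, hy⟩, hmem, rfl⟩; exact ⟨hy, hmem⟩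
      · rintro ⟨h1, h2⟩; exact ⟨⟨y, h1⟩, h2, rfl⟩
    rw [himg]
    have hclosed : IsClosed {y : ∀ j, G j | (∀ j, p j (y (j + 1)) = y j) ∧ y 0 ∈ T} := by
      have : {y : ∀ j, G j | (∀ j, p j (y (j + 1)) = y j) ∧ y 0 ∈ T} =
          (⋂ j, {y : ∀ j, G j | p j (y (j + 1)) = y j}) ∩ {y : ∀ j, G j | y 0 ∈ T} := by
        ext y; simp [Set.mem_iInter]
      rw [this]
      exact (isClosed_iInter fun j =>
        isClosed_eq ((hpc j).comp (continuous_apply (j + 1))) (continuous_apply j)).inter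
        (hTclosed.preimage (continuous_apply 0))
    refine (isCompact_univ_pi fun j => toZero_proper p hpp hχsupp j).of_isClosed_subset
      hclosed ?_
    rintro y ⟨h1, h2⟩ j -
    show toZero p j (y j) ∈ T
    rw [toZero_apply p h1 j]
    exact h2
  -- tsupport f ⊆ K
  have hSK : tsupport f ⊆ K := by
    intro x hx
    have h1 : χ (x.1 0) = 1 := hχ1 (mem_image_of_mem _ hx)
    show x.1 0 ∈ T
    exact subset_tsupport χ (by simp [Function.mem_support, h1])
  refine ⟨K, hK, hSK, ?_⟩
  intro ε hε
  haveI : CompactSpace K := isCompact_iff_compactSpace.mp hK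
  -- the subalgebra of pullbacks, restricted to K
  let A : StarSubalgebra ℂ C(K, ℂ) :=
    { carrier := {φ | ∃ (j : ℕ) (g : G j → ℂ), Continuous g ∧ ∀ x : K, φ x = g (x.1.1 j)}
      mul_mem' := by
        rintro φ ψ ⟨j, g, hg, hgeq⟩ ⟨k, h, hh, hheq⟩
        obtain ⟨g', hg', hg'eq⟩ := lift_to p hpc (le_max_left j k) g hg
        obtain ⟨h', hh', hh'eq⟩ := lift_to p hpc (le_max_right j k) h hh
        exact ⟨max j k, g' * h', hg'.mul hh', fun x => by
          simp [hgeq x, hheq x, ← hg'eq x.1, ← hh'eq x.1]⟩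
      add_mem' := by
        rintro φ ψ ⟨j, g, hg, hgeq⟩ ⟨k, h, hh, hheq⟩
        obtain ⟨g', hg', hg'eq⟩ := lift_to p hpc (le_max_left j k) g hg
        obtain ⟨h', hh', hh'eq⟩ := lift_to p hpc (le_max_right j k) h hh
        exact ⟨max j k, g' + h', hg'.add hh', fun x => by
          simp [hgeq x, hheq x, ← hg'eq x.1, ← hh'eq x.1]⟩
      algebraMap_mem' := fun c => ⟨0, fun _ => c, continuous_const, fun x => rfl⟩
      star_mem' := by
        rintro φ ⟨j, g, hg, hgeq⟩
        exact ⟨j, fun y => star (g y), continuous_star.comp hg, fun x => by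
          simp [hgeq x]⟩ }
  have hsep : A.SeparatesPoints := by
    intro x y hxy
    have hne : x.1 ≠ y.1 := fun h => hxy (Subtype.ext h)
    have : ∃ j, x.1.1 j ≠ y.1.1 j := by
      by_contra hcon
      push_neg at hcon
      exact hne (Subtype.ext (funext hcon))
    obtain ⟨j, hj⟩ := this
    obtain ⟨φ, hφ1, hφ0, -, -⟩ :=
      exists_continuous_one_zero_of_isCompact (isCompact_singleton (x := x.1.1 j))
        (isClosed_singleton (x := y.1.1 j)) (by simpa using hj)
    refine ⟨fun z : K => (φ (z.1.1 j) : ℂ), ⟨⟨fun z : K => (φ (z.1.1 j) : ℂ),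
      Complex.continuous_ofReal.comp (φ.continuous.comp ((hproj j).comp
        continuous_subtype_val))⟩, ⟨j, fun z => (φ z : ℂ),
      Complex.continuous_ofReal.comp φ.continuous, fun _ => rfl⟩, rfl⟩, ?_⟩
    simp only [hφ1 (mem_singleton _), hφ0 (mem_singleton _)]
    norm_num
  -- Stone–Weierstrass
  have hdense := ContinuousMap.starSubalgebra_topologicalClosure_eq_top_of_separatesPoints A hsep
  set fK : C(K, ℂ) := ⟨fun x => f x.1, hf.comp continuous_subtype_val⟩ with hfK
  have hmem : fK ∈ closure (A : Set C(K, ℂ)) := by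
    have : fK ∈ A.topologicalClosure := hdense ▸ trivial
    exact this
  obtain ⟨φ, hφA, hdist⟩ := Metric.mem_closure_iff.mp hmem (ε / 2) (half_pos hε)
  obtain ⟨j, g, hg, hgeq⟩ := hφA
  -- the final approximant
  refine ⟨j, fun y => (χ (toZero p j y) : ℂ) * g y,
    (Complex.continuous_ofReal.comp (χ.continuous.comp (toZero_continuous p hpc j))).mul hg,
    ?_, ?_, ?_⟩
  · refine HasCompactSupport.intro (toZero_proper p hpp hχsupp j) ?_
    intro y hy
    have : χ (toZero p j y) = 0 := image_eq_zero_of_notMem_tsupport hy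
    simp [this]
  · refine closure_minimal ?_ hKclosed
    intro x hx
    have hne : (χ (toZero p j (x.1 j)) : ℂ) ≠ 0 := by
      intro h0
      apply hx
      simp [h0]
    rw [toZero_apply p x.2 j] at hne
    show x.1 0 ∈ T
    refine subset_tsupport χ ?_
    simp only [Function.mem_support]
    exact_mod_cast hne
  · intro x
    show ‖f x - (χ (toZero p j (x.1 j)) : ℂ) * g (x.1 j)‖ < ε
    rw [toZero_apply p x.2 j]
    by_cases hx : x ∈ K
    · have hfval : f x = (χ (x.1 0) : ℂ) * f x := by
        by_cases hfx : f x = 0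
        · simp [hfx]
        · have : x ∈ tsupport f := subset_tsupport f hfx
          rw [hχ1 (mem_image_of_mem _ this)]
          simp
      have hφval : φ ⟨x, hx⟩ = g (x.1 j) := hgeq ⟨x, hx⟩
      have hd : ‖f x - g (x.1 j)‖ ≤ ε / 2 := by
        have := ContinuousMap.dist_apply_le_dist (f := fK) (g := φ) ⟨x, hx⟩
        rw [hφval] at this
        calc ‖f x - g (x.1 j)‖ = dist (fK ⟨x, hx⟩) (g (x.1 j)) := by
              simp [hfK, Complex.dist_eq]
          _ ≤ dist fK φ := by rw [← hφval]; exact ContinuousMap.dist_apply_le_dist _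
          _ ≤ ε / 2 := le_of_lt hdist
      have hχle : ‖(χ (x.1 0) : ℂ)‖ ≤ 1 := by
        rw [Complex.norm_real]
        exact abs_le.mpr ⟨by linarith [(hχrange (x.1 0)).1], (hχrange (x.1 0)).2⟩
      calc ‖f x - (χ (x.1 0) : ℂ) * g (x.1 j)‖
          = ‖(χ (x.1 0) : ℂ) * (f x - g (x.1 j))‖ := by rw [mul_sub, ← hfval]
        _ = ‖(χ (x.1 0) : ℂ)‖ * ‖f x - g (x.1 j)‖ := norm_mul _ _
        _ ≤ 1 * (ε / 2) := by
            exact mul_le_mul hχle hd (norm_nonneg _) zero_le_one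
        _ < ε := by linarith
    · have hf0 : f x = 0 := image_eq_zero_of_notMem_tsupport (fun h => hx (hSK h))
      have hχ0 : χ (x.1 0) = 0 := image_eq_zero_of_notMem_tsupport hx
      simp [hf0, hχ0, hε]
end

section
/- Let (Σ_j, p_j)_{j ∈ ℕ} and (G_j, q_j)_{j ∈ ℕ} be inverse sequences of topological spaces with continuous bonding maps, and let π_j : Σ_j → G_j be continuous maps satisfying π_j ∘ p_j = q_j ∘ π_{j+1}. Let Z be a topological group acting continuously on each Σ_j such that every p_j is Z-equivariant. Let U_0 ⊆ G_0 be open, U_{j+1} := q_j^{-1}(U_j), and let ρ_j : U_j → Σ_j be continuous maps with π_j ∘ ρ_j = id and p_j ∘ ρ_{j+1} = ρ_j ∘ q_j on U_{j+1}. Assume that for every j the map Z × U_j → Σ_j, (z, γ) ↦ z·ρ_j(γ), is a homeomorphism onto π_j^{-1}(U_j). Let Σ̄, Ḡ be the inverse limits, π̄ : Σ̄ → Ḡ the induced map, Ū := (q_0^∞)^{-1}(U_0), and ρ̄ : Ū → Σ̄, (γ_j) ↦ (ρ_j(γ_j)). Then: (a) acting coordinatewise, Z acts continuously on Σ̄;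 (b) the map Z × Ū → Σ̄, (z, x) ↦ z·ρ̄(x), is a homeomorphism onto π̄^{-1}(Ū). In particular, local trivializations of a principal Z-bundle structure pass to the inverse limit. -/
/-- Local trivializations of a principal `Z`-bundle structure pass to the
inverse limit: given inverse sequences `(Σ j, p j)`, `(G j, q j)` with compatible maps
`π j : Σ j → G j`, a topological group `Z` acting continuously on each `Σ j` with
`Z`-equivariant bonding maps, opens `U (j+1) = q j ⁻¹' (U j)` and compatible continuous
sections `ρ j` of `π j` such that `(z, γ) ↦ z • ρ j γ` is a homeomorphism of `Z × U j` onto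
`π j ⁻¹' (U j)`, then (a) `Z` acts continuously on the inverse limit `Σ̄` coordinatewise,
and (b) `(z, x) ↦ z • ρ̄ x` is a homeomorphism of `Z × Ū` onto `π̄ ⁻¹' Ū`. -/
theorem inverseLimit_principal_bundle_local_trivialization
    (S G : ℕ → Type*) [∀ j, TopologicalSpace (S j)] [∀ j, TopologicalSpace (G j)]
    (p : ∀ j, S (j + 1) → S j) (q : ∀ j, G (j + 1) → G j)
    (hpc : ∀ j, Continuous (p j)) (hqc : ∀ j, Continuous (q j))
    (π : ∀ j, S j → G j) (hπc : ∀ j, Continuous (π j))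
    (hcomm : ∀ j (x : S (j + 1)), π j (p j x) = q j (π (j + 1) x))
    (Z : Type*) [TopologicalSpace Z] [Group Z] [IsTopologicalGroup Z]
    [∀ j, MulAction Z (S j)] [∀ j, ContinuousSMul Z (S j)]
    (hequiv : ∀ j (z : Z) (x : S (j + 1)), p j (z • x) = z • p j x)
    (U : ∀ j, Set (G j)) (hU0 : IsOpen (U 0)) (hUsucc : ∀ j, U (j + 1) = q j ⁻¹' U j)
    (ρ : ∀ j, G j → S j) (hρcont : ∀ j, ContinuousOn (ρ j) (U j))
    (hρsec : ∀ j, ∀ γ ∈ U j, π j (ρ j γ) = γ)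
    (hρcomp : ∀ j, ∀ γ ∈ U (j + 1), p j (ρ (j + 1) γ) = ρ j (q j γ))
    -- `(z, γ) ↦ z • ρ j γ` is a homeomorphism of `Z × U j` onto `π j ⁻¹' (U j)`:
    (htriv_bij : ∀ j, Set.BijOn (fun zγ : Z × G j => zγ.1 • ρ j zγ.2)
      (Set.univ ×ˢ U j) (π j ⁻¹' U j))
    (htriv_cont : ∀ j, ContinuousOn (fun zγ : Z × G j => zγ.1 • ρ j zγ.2) (Set.univ ×ˢ U j))
    (htriv_open : ∀ j, ∀ V : Set (Z × G j), IsOpen V →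
      IsOpen ((fun zγ : Z × G j => zγ.1 • ρ j zγ.2) '' (V ∩ Set.univ ×ˢ U j)))
    -- the map `(z, x) ↦ z • ρ̄ x` from `Z × Ḡ` into the ambient product `∀ j, Σ j`,
    -- the domain `Z × Ū`, and the target `π̄ ⁻¹' Ū ⊆ Σ̄`:
    (Fbar : Z × InverseLimit G q → ∀ j, S j)
    (hFbar : Fbar = fun zx => fun j => zx.1 • ρ j (zx.2.1 j))
    (Dom : Set (Z × InverseLimit G q)) (hDom : Dom = {zx | zx.2.1 0 ∈ U 0})
    (Tgt : Set (∀ j, S j))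
    (hTgt : Tgt = {σ | (∀ j, p j (σ (j + 1)) = σ j) ∧ π 0 (σ 0) ∈ U 0}) :
    -- (a) `Z` acts continuously on `Σ̄` coordinatewise:
    ((∀ (z : Z) (σ : InverseLimit S p) (j : ℕ), p j (z • σ.1 (j + 1)) = z • σ.1 j) ∧
      Continuous (fun zσ : Z × InverseLimit S p => (fun j => zσ.1 • zσ.2.1 j : ∀ j, S j))) ∧
    -- (b) `(z, x) ↦ z • ρ̄ x` is a homeomorphism of `Z × Ū` onto `π̄ ⁻¹' Ū`:
    (Set.BijOn Fbar Dom Tgt ∧ ContinuousOn Fbar Dom ∧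
      ∀ V : Set (Z × InverseLimit G q), IsOpen V →
        ∃ W : Set (∀ j, S j), IsOpen W ∧ Fbar '' (V ∩ Dom) = W ∩ Tgt) := by
  classical
  subst hFbar hDom hTgt
  -- coordinates of Dom elements stay in U j
  have hUmem : ∀ (x : InverseLimit G q), x.1 0 ∈ U 0 → ∀ j, x.1 j ∈ U j := by
    intro x h0 j
    induction j with
    | zero => exact h0
    | succ j ih =>
      rw [hUsucc]
      show q j (x.1 (j + 1)) ∈ U j
      rw [x.2 j]; exact ih
  -- (a)
  have haequiv : ∀ (z : Z) (σ : InverseLimit S p) (j : ℕ),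
      p j (z • σ.1 (j + 1)) = z • σ.1 j := by
    intro z σ j
    rw [hequiv, σ.2 j]
  have hacont : Continuous
      (fun zσ : Z × InverseLimit S p => (fun j => zσ.1 • zσ.2.1 j : ∀ j, S j)) := by
    refine continuous_pi fun j => Continuous.smul continuous_fst ?_
    exact (continuous_apply j).comp (continuous_subtype_val.comp continuous_snd)
  -- (b) MapsTo
  have hmapsTo : Set.MapsTo
      (fun zx : Z × InverseLimit G q => (fun j => zx.1 • ρ j (zx.2.1 j) : ∀ j, S j))
      {zx | zx.2.1 0 ∈ U 0}
      {σ : ∀ j, S j | (∀ j, p j (σ (j + 1)) = σ j) ∧ π 0 (σ 0) ∈ U 0} := by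
    rintro ⟨z, x⟩ hx
    have hx0 : x.1 0 ∈ U 0 := hx
    refine ⟨fun j => ?_, ?_⟩
    · show p j (z • ρ (j + 1) (x.1 (j + 1))) = z • ρ j (x.1 j)
      rw [hequiv, hρcomp j _ (hUmem x hx0 (j + 1)), x.2 j]
    · exact (htriv_bij 0).1 (show (z, x.1 0) ∈ Set.univ ×ˢ U 0 from ⟨Set.mem_univ _, hx0⟩)
  -- (b) InjOn
  have hinj : Set.InjOn
      (fun zx : Z × InverseLimit G q => (fun j => zx.1 • ρ j (zx.2.1 j) : ∀ j, S j))
      {zx | zx.2.1 0 ∈ U 0} := by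
    rintro ⟨z, x⟩ hx ⟨z', x'⟩ hx' h
    have hj : ∀ j, (z, x.1 j) = (z', x'.1 j) := fun j =>
      (htriv_bij j).2.1 (show (z, x.1 j) ∈ Set.univ ×ˢ U j from ⟨Set.mem_univ _, hUmem x hx j⟩)
        (show (z', x'.1 j) ∈ Set.univ ×ˢ U j from ⟨Set.mem_univ _, hUmem x' hx' j⟩)
        (congrFun h j)
    have hz : z = z' := congrArg Prod.fst (hj 0)
    have hx : x = x' := Subtype.ext (funext fun j => congrArg Prod.snd (hj j))
    rw [hz, hx]
  -- (b) SurjOn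
  have hsurj : Set.SurjOn
      (fun zx : Z × InverseLimit G q => (fun j => zx.1 • ρ j (zx.2.1 j) : ∀ j, S j))
      {zx | zx.2.1 0 ∈ U 0}
      {σ : ∀ j, S j | (∀ j, p j (σ (j + 1)) = σ j) ∧ π 0 (σ 0) ∈ U 0} := by
    rintro σ ⟨hcompat, h0⟩
    have hπU : ∀ j, σ j ∈ π j ⁻¹' U j := by
      intro j
      induction j with
      | zero => exact h0
      | succ j ih =>
        show π (j + 1) (σ (j + 1)) ∈ U (j + 1)
        rw [hUsucc]
        show q j (π (j + 1) (σ (j + 1))) ∈ U j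
        rw [← hcomm, hcompat j]; exact ih
    choose w hw hweq using fun j => (htriv_bij j).2.2 (hπU j)
    have hstep : ∀ j, ((w (j + 1)).1, q j (w (j + 1)).2) = w j := by
      intro j
      have hq1 : q j (w (j + 1)).2 ∈ U j := by
        have := (hw (j + 1)).2
        rwa [hUsucc] at this
      refine (htriv_bij j).2.1 (show ((w (j + 1)).1, q j (w (j + 1)).2) ∈ Set.univ ×ˢ U j from ⟨Set.mem_univ _, hq1⟩) (hw j) ?_
      show (w (j + 1)).1 • ρ j (q j (w (j + 1)).2) = (w j).1 • ρ j ((w j).2)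
      rw [← hρcomp j _ (hw (j + 1)).2, ← hequiv]
      have h1 : (w (j + 1)).1 • ρ (j + 1) (w (j + 1)).2 = σ (j + 1) := hweq (j + 1)
      have h2 : (w j).1 • ρ j (w j).2 = σ j := hweq j
      rw [h1, hcompat j, ← h2]
    have hzconst : ∀ j, (w j).1 = (w 0).1 := by
      intro j
      induction j with
      | zero => rfl
      | succ j ih => rw [← ih]; exact congrArg Prod.fst (hstep j)
    refine ⟨((w 0).1, ⟨fun j => (w j).2, fun j => congrArg Prod.snd (hstep j)⟩),
      (hw 0).2, ?_⟩
    funext j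
    show (w 0).1 • ρ j ((w j).2) = σ j
    rw [← hzconst j]
    exact hweq j
  -- (b) ContinuousOn
  have hcont : ContinuousOn
      (fun zx : Z × InverseLimit G q => (fun j => zx.1 • ρ j (zx.2.1 j) : ∀ j, S j))
      {zx | zx.2.1 0 ∈ U 0} := by
    refine continuousOn_pi.mpr fun j => ?_
    have hg : Continuous (fun zx : Z × InverseLimit G q => (zx.1, zx.2.1 j)) :=
      continuous_fst.prodMk
        ((continuous_apply j).comp (continuous_subtype_val.comp continuous_snd))
    exact (htriv_cont j).comp hg.continuousOn
      (fun zx hzx => show (zx.1, zx.2.1 j) ∈ Set.univ ×ˢ U j from ⟨Set.mem_univ _, hUmem zx.2 hzx j⟩)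
  -- (b) openness
  have hopen : ∀ V : Set (Z × InverseLimit G q), IsOpen V →
      ∃ W : Set (∀ j, S j), IsOpen W ∧
        (fun zx : Z × InverseLimit G q => (fun j => zx.1 • ρ j (zx.2.1 j) : ∀ j, S j)) ''
          (V ∩ {zx | zx.2.1 0 ∈ U 0}) =
        W ∩ {σ : ∀ j, S j | (∀ j, p j (σ (j + 1)) = σ j) ∧ π 0 (σ 0) ∈ U 0} := by
    intro V hV
    -- earlier coordinates of the limit are continuous functions of later ones
    have hproj : ∀ j k, j ≤ k → ∃ f : G k → G j, Continuous f ∧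
        ∀ y : InverseLimit G q, f (y.1 k) = y.1 j := by
      intro j k
      induction k with
      | zero =>
        intro h
        obtain rfl := Nat.le_zero.mp h
        exact ⟨id, continuous_id, fun y => rfl⟩
      | succ k ih =>
        intro h
        rcases Nat.lt_or_ge j (k + 1) with h' | h'
        · obtain ⟨f, hf, hfy⟩ := ih (Nat.lt_succ_iff.mp h')
          refine ⟨f ∘ q k, hf.comp (hqc k), fun y => ?_⟩
          show f (q k (y.1 (k + 1))) = y.1 j
          rw [y.2 k]; exact hfy y
        · obtain rfl := Nat.le_antisymm h h'
          exact ⟨id, continuous_id, fun y => rfl⟩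
    -- basic neighborhoods inside V controlled by a single coordinate
    have key : ∀ zx ∈ V ∩ {zx : Z × InverseLimit G q | zx.2.1 0 ∈ U 0},
        ∃ (A : Set Z) (N : ℕ) (B : Set (G N)),
          IsOpen A ∧ IsOpen B ∧ zx.1 ∈ A ∧ zx.2.1 N ∈ B ∧
          ∀ zy : Z × InverseLimit G q, zy.1 ∈ A → zy.2.1 N ∈ B → zy ∈ V := by
      rintro ⟨z, x⟩ ⟨hV1, -⟩
      obtain ⟨u, v, hu, hv, hzu, hxv, huv⟩ := isOpen_prod_iff.mp hV z x hV1
      obtain ⟨t, ht, htv⟩ := isOpen_induced_iff.mp hv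
      have hxt : x.1 ∈ t := by rw [← htv] at hxv; exact hxv
      obtain ⟨I, u', hu', hsub⟩ := isOpen_pi_iff.mp ht x.1 hxt
      set N := I.sup id with hN
      choose f hfc hfy using fun i : I => hproj i.1 N (Finset.le_sup (f := id) i.2)
      refine ⟨u, N, ⋂ i : I, f i ⁻¹' u' i.1, hu,
        isOpen_iInter_of_finite fun i => (hu' i.1 i.2).1.preimage (hfc i), hzu, ?_, ?_⟩
      · refine Set.mem_iInter.mpr fun i => ?_
        show f i (x.1 N) ∈ u' i.1
        rw [hfy i x]
        exact (hu' i.1 i.2).2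
      · rintro ⟨z', y⟩ hz' hy
        refine huv (show (z', y) ∈ u ×ˢ v from ⟨hz', ?_⟩)
        rw [← htv]
        show y.1 ∈ t
        refine hsub (Set.mem_pi.mpr fun i hi => ?_)
        have := hfy ⟨i, hi⟩ y
        rw [← this]
        exact Set.mem_iInter.mp hy ⟨i, hi⟩
    choose A N B hA hB hmemA hmemB hsubV using
      fun i : ↥(V ∩ {zx : Z × InverseLimit G q | zx.2.1 0 ∈ U 0}) => key i.1 i.2
    refine ⟨⋃ i, (fun σ : ∀ j, S j => σ (N i)) ⁻¹'
        ((fun zγ : Z × G (N i) => zγ.1 • ρ (N i) zγ.2) ''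
          ((A i ×ˢ B i) ∩ Set.univ ×ˢ U (N i))), ?_, ?_⟩
    · exact isOpen_iUnion fun i =>
        (htriv_open (N i) _ ((hA i).prod (hB i))).preimage (continuous_apply (N i))
    · ext σ
      constructor
      · rintro ⟨⟨z, x⟩, hzx, rfl⟩
        refine ⟨Set.mem_iUnion.mpr ⟨⟨(z, x), hzx⟩, ?_⟩, hmapsTo (hzx.2 : x.1 0 ∈ U 0)⟩
        exact ⟨(z, x.1 (N ⟨(z, x), hzx⟩)),
          ⟨⟨hmemA _, hmemB _⟩, ⟨Set.mem_univ _, hUmem x hzx.2 _⟩⟩, rfl⟩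
      · rintro ⟨hW, hT⟩
        obtain ⟨i, hWi⟩ := Set.mem_iUnion.mp hW
        obtain ⟨⟨z₁, γ⟩, ⟨hmem1, hmem2⟩, hval⟩ := hWi
        obtain ⟨⟨z, x⟩, hDomm, hFeq⟩ := hsurj hT
        have hσN : σ (N i) = z • ρ (N i) (x.1 (N i)) := (congrFun hFeq (N i)).symm
        have heqp : (z₁, γ) = (z, x.1 (N i)) := by
          refine (htriv_bij (N i)).2.1 hmem2
            (show (z, x.1 (N i)) ∈ Set.univ ×ˢ U (N i) from ⟨Set.mem_univ _, hUmem x hDomm (N i)⟩) ?_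
          exact hval.trans hσN
        have hz12 : z₁ = z := congrArg Prod.fst heqp
        have hγ12 : γ = x.1 (N i) := congrArg Prod.snd heqp
        have hz : z ∈ A i := hz12 ▸ hmem1.1
        have hxB : x.1 (N i) ∈ B i := hγ12 ▸ hmem1.2
        exact ⟨(z, x), ⟨hsubV i (z, x) hz hxB, hDomm⟩, hFeq⟩
  exact ⟨⟨haequiv, hacont⟩, ⟨hmapsTo, hinj, hsurj⟩, hcont, hopen⟩
end

section
/- Let (G_j, p_j)_{j ∈ ℕ} and (X_j, q_j)_{j ∈ ℕ} be inverse sequences of topological spaces with continuous bonding maps, and let s_j : G_j → X_j be continuous maps satisfying q_j ∘ s_{j+1} = s_j ∘ p_j for all j. Assume: (a) for every j, every open U ⊆ X_j and every continuous map t : U → G_j with open image satisfying s_j ∘ t = id_U, there exists a continuous map t' : q_j^{-1}(U) → G_{j+1} with open image satisfying s_{j+1} ∘ t' = id and p_j ∘ t' = t ∘ q_j; (b) for every g ∈ G_0 there exist an open set U ⊆ X_0 containing s_0(g) and a continuous map t : U → G_0 with open image satisfying s_0 ∘ t = id_U and t(s_0(g)) = g; (c) for every j and every x ∈ X_{j+1},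 the restriction of p_j to the fiber s_{j+1}^{-1}({x}) is injective. Let Ḡ, X̄ be the inverse limits and s̄ : Ḡ → X̄ the induced continuous map (g_j) ↦ (s_j(g_j)). Then for every ḡ ∈ Ḡ there exist an open set Ū ⊆ X̄ containing s̄(ḡ) and a continuous map t̄ : Ū → Ḡ with open image such that s̄ ∘ t̄ = id_{Ū} and t̄(s̄(ḡ)) = ḡ. -/
/-- Auxiliary packaging of a continuous open-image section over an open set. -/
structure SectPack {Gj Xj : Type*} [TopologicalSpace Gj] [TopologicalSpace Xj]
    (s : Gj → Xj) where
  U : Set Xj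
  hU : IsOpen U
  t : U → Gj
  ht : Continuous t
  hto : IsOpen (Set.range t)
  hts : ∀ x : U, s (t x) = x


/-- Given inverse sequences `(G j, p j)` and `(X j, q j)` with compatible
continuous maps `s j : G j → X j`, assume that (a) continuous open-image sections of `s j`
over opens `U` lift to continuous open-image sections of `s (j+1)` over `q j ⁻¹' U`
compatibly with the bonding maps, (b) every `g ∈ G 0` lies in the image of some continuous
open-image section of `s 0` over an open neighbourhood of `s 0 g`, and (c) each `p j` is
injective on the fibers of `s (j+1)`.  Then every point `ḡ` of the inverse limit `Ḡ` lies
in the image of a continuous open-image section of the induced map `s̄ : Ḡ → X̄` over an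
open set containing `s̄ ḡ`. -/
theorem inverseLimit_sections_of_induced_map
    (G X : ℕ → Type*) [∀ j, TopologicalSpace (G j)] [∀ j, TopologicalSpace (X j)]
    (p : ∀ j, G (j + 1) → G j) (q : ∀ j, X (j + 1) → X j)
    (hpc : ∀ j, Continuous (p j)) (hqc : ∀ j, Continuous (q j))
    (s : ∀ j, G j → X j) (hsc : ∀ j, Continuous (s j))
    (hcomm : ∀ j (g : G (j + 1)), q j (s (j + 1) g) = s j (p j g))
    -- (a) sections lift along the inverse sequence:
    (hlift : ∀ j (U : Set (X j)), IsOpen U → ∀ t : U → G j, Continuous t →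
      IsOpen (Set.range t) → (∀ x : U, s j (t x) = x) →
      ∃ t' : (q j ⁻¹' U : Set (X (j + 1))) → G (j + 1), Continuous t' ∧
        IsOpen (Set.range t') ∧ (∀ x : (q j ⁻¹' U : Set (X (j + 1))), s (j + 1) (t' x) = x) ∧
        ∀ x : (q j ⁻¹' U : Set (X (j + 1))), p j (t' x) = t ⟨q j x.1, x.2⟩)
    -- (b) sections through every point at level `0`:
    (hbase : ∀ g : G 0, ∃ (U : Set (X 0)) (hU : IsOpen U) (hg : s 0 g ∈ U) (t : U → G 0),
      Continuous t ∧ IsOpen (Set.range t) ∧ (∀ x : U, s 0 (t x) = x) ∧ t ⟨s 0 g, hg⟩ = g)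
    -- (c) the bonding maps are injective on fibers:
    (hinj : ∀ j (x : X (j + 1)), Set.InjOn (p j) (s (j + 1) ⁻¹' {x}))
    -- the induced map `s̄ : Ḡ → X̄`:
    (sbar : InverseLimit G p → InverseLimit X q)
    (hsbar : ∀ (g : InverseLimit G p) (j : ℕ), (sbar g).1 j = s j (g.1 j)) :
    ∀ gbar : InverseLimit G p, ∃ (Ubar : Set (InverseLimit X q)) (_ : IsOpen Ubar)
      (hmem : sbar gbar ∈ Ubar) (tbar : Ubar → InverseLimit G p),
      Continuous tbar ∧ IsOpen (Set.range tbar) ∧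
        (∀ x : Ubar, sbar (tbar x) = x.1) ∧ tbar ⟨sbar gbar, hmem⟩ = gbar := by
  intro gbar
  classical
  obtain ⟨U0, hU0, hg0, t0, ht0c, ht0o, ht0s, ht0g⟩ := hbase (gbar.1 0)
  -- lifting step, packaged
  have step : ∀ j (P : SectPack (s j)), ∃ P' : SectPack (s (j + 1)),
      P'.U = q j ⁻¹' P.U ∧ ∀ (x : X (j + 1)) (hx : x ∈ P'.U) (hx' : q j x ∈ P.U),
        p j (P'.t ⟨x, hx⟩) = P.t ⟨q j x, hx'⟩ := by
    intro j P
    obtain ⟨t', h1, h2, h3, h4⟩ := hlift j P.U P.hU P.t P.ht P.hto P.hts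
    exact ⟨⟨q j ⁻¹' P.U, P.hU.preimage (hqc j), t', h1, h2, h3⟩, rfl,
      fun x hx hx' => h4 ⟨x, hx⟩⟩
  -- the tower of sections
  let F : ∀ j, SectPack (s j) := fun j =>
    Nat.rec (motive := fun j => SectPack (s j))
      ⟨U0, hU0, t0, ht0c, ht0o, ht0s⟩
      (fun j ih => Classical.choose (step j ih)) j
  have hFU : ∀ j, (F (j + 1)).U = q j ⁻¹' (F j).U :=
    fun j => (Classical.choose_spec (step j (F j))).1
  have hFp : ∀ j (x : X (j + 1)) (hx : x ∈ (F (j + 1)).U) (hx' : q j x ∈ (F j).U),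
      p j ((F (j + 1)).t ⟨x, hx⟩) = (F j).t ⟨q j x, hx'⟩ :=
    fun j => (Classical.choose_spec (step j (F j))).2
  have hmemAll : ∀ x : InverseLimit X q, x.1 0 ∈ (F 0).U → ∀ j, x.1 j ∈ (F j).U := by
    intro x h0 j
    induction j with
    | zero => exact h0
    | succ j ih =>
      rw [hFU j]
      show q j (x.1 (j + 1)) ∈ (F j).U
      rw [x.2 j]; exact ih
  -- the limit section
  have key : ∀ (x : InverseLimit X q) (h0 : x.1 0 ∈ (F 0).U) (j : ℕ),
      p j ((F (j + 1)).t ⟨x.1 (j + 1), hmemAll x h0 (j + 1)⟩)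
        = (F j).t ⟨x.1 j, hmemAll x h0 j⟩ := by
    intro x h0 j
    have hx' : q j (x.1 (j + 1)) ∈ (F j).U := by rw [x.2 j]; exact hmemAll x h0 j
    rw [hFp j _ _ hx']
    exact congrArg (F j).t (Subtype.ext (x.2 j))
  let Ubar : Set (InverseLimit X q) := {x : InverseLimit X q | x.1 0 ∈ (F 0).U}
  have hUbarOpen : IsOpen Ubar :=
    IsOpen.preimage ((continuous_apply 0).comp continuous_subtype_val) (F 0).hU
  let tbar : Ubar → InverseLimit G p := fun xu =>
    ⟨fun j => (F j).t ⟨xu.1.1 j, hmemAll xu.1 xu.2 j⟩, fun j => key xu.1 xu.2 j⟩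
  have htbarc : Continuous tbar := by
    apply Continuous.subtype_mk
    apply continuous_pi
    intro j
    exact (F j).ht.comp (Continuous.subtype_mk
      ((continuous_apply j).comp (continuous_subtype_val.comp continuous_subtype_val)) _)
  have hsec : ∀ x : Ubar, sbar (tbar x) = x.1 := by
    intro x
    apply Subtype.ext; funext j
    rw [hsbar]
    exact (F j).hts ⟨x.1.1 j, hmemAll x.1 x.2 j⟩
  -- points over the image of `t0` are recovered by `tbar`
  have hmem0 : ∀ (g : InverseLimit G p) (y : (F 0).U), g.1 0 = (F 0).t y →
      (sbar g).1 0 ∈ (F 0).U := by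
    intro g y hy
    rw [hsbar, hy, (F 0).hts y]
    exact y.2
  have key2 : ∀ (g : InverseLimit G p) (y : (F 0).U) (hy : g.1 0 = (F 0).t y) (j : ℕ),
      g.1 j = (F j).t ⟨(sbar g).1 j, hmemAll (sbar g) (hmem0 g y hy) j⟩ := by
    intro g y hy j
    have h0 := hmem0 g y hy
    induction j with
    | zero =>
      rw [hy]
      refine congrArg (F 0).t (Subtype.ext ?_)
      show y.1 = (sbar g).1 0
      rw [hsbar, hy, (F 0).hts y]
    | succ j ih =>
      have m1 : g.1 (j + 1) ∈ s (j + 1) ⁻¹' {(sbar g).1 (j + 1)} := (hsbar g (j + 1)).symm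
      have m2 : (F (j + 1)).t ⟨(sbar g).1 (j + 1), hmemAll (sbar g) h0 (j + 1)⟩
          ∈ s (j + 1) ⁻¹' {(sbar g).1 (j + 1)} :=
        (F (j + 1)).hts ⟨(sbar g).1 (j + 1), hmemAll (sbar g) h0 (j + 1)⟩
      apply hinj j ((sbar g).1 (j + 1)) m1 m2
      rw [g.2 j, ih, key (sbar g) h0 j]
  have hrange : Set.range tbar = {g : InverseLimit G p | g.1 0 ∈ Set.range (F 0).t} := by
    ext g
    constructor
    · rintro ⟨x, rfl⟩
      exact ⟨⟨x.1.1 0, hmemAll x.1 x.2 0⟩, rfl⟩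
    · rintro ⟨y, hy⟩
      have hy' : g.1 0 = (F 0).t y := hy.symm
      have h0 := hmem0 g y hy'
      refine ⟨⟨sbar g, h0⟩, ?_⟩
      apply Subtype.ext; funext j
      exact (key2 g y hy' j).symm
  have hro : IsOpen (Set.range tbar) := by
    rw [hrange]
    exact IsOpen.preimage ((continuous_apply 0).comp continuous_subtype_val) (F 0).hto
  have hmemg : sbar gbar ∈ Ubar := hmem0 gbar ⟨s 0 (gbar.1 0), hg0⟩ ht0g.symm
  refine ⟨Ubar, hUbarOpen, hmemg, tbar, htbarc, hro, hsec, ?_⟩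
  apply Subtype.ext; funext j
  exact (key2 gbar ⟨s 0 (gbar.1 0), hg0⟩ ht0g.symm j).symm
end

section
/- For each j ∈ ℕ let G_j be a locally compact Hausdorff topological space and let p_j : G_{j+1} → G_j be a continuous proper map, and let Ḡ be the inverse limit. Then: (a) for every j and every continuous function f : G_j → ℂ vanishing at infinity, the function f ∘ p_j^∞ : Ḡ → ℂ is continuous and vanishes at infinity, and the map f ↦ f ∘ p_j^∞ is a *-homomorphism C₀(G_j) → C₀(Ḡ); (b) the union over all j of the images of these maps is dense in C₀(Ḡ) with respect to the supremum norm; (c) if moreover every p_j is surjective, then each map f ↦ f ∘ p_j^∞ is isometric. -/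
open scoped ZeroAtInfty
open Filter Set

set_option linter.unusedSectionVars false
set_option maxHeartbeats 1000000

namespace InvLimSW


variable {G : ℕ → Type*} [∀ j, TopologicalSpace (G j)]

section maps
variable (p : ∀ j, G (j + 1) → G j)

def toZero : ∀ k, G k → G 0
  | 0 => id
  | k + 1 => toZero k ∘ p k

lemma toZero_continuous (hpc : ∀ j, Continuous (p j)) : ∀ k, Continuous (toZero p k)
  | 0 => continuous_id
  | k + 1 => (toZero_continuous hpc k).comp (hpc k)

lemma toZero_isCompact_preimage (hpp : ∀ j, ∀ K : Set (G j), IsCompact K → IsCompact (p j ⁻¹' K)) :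
    ∀ k (K : Set (G 0)), IsCompact K → IsCompact (toZero p k ⁻¹' K)
  | 0, _, hK => hK
  | k + 1, K, hK => hpp k _ (toZero_isCompact_preimage hpp k K hK)

lemma toZero_coord (x : ∀ k, G k) (hx : ∀ k, p k (x (k + 1)) = x k) :
    ∀ k, toZero p k (x k) = x 0
  | 0 => rfl
  | k + 1 => by
      show toZero p k (p k (x (k + 1))) = x 0
      rw [hx k]; exact toZero_coord x hx k

def down : ∀ (i n : ℕ), G (i + n) → G i
  | _, 0 => id
  | i, n + 1 => fun z => down i n (p (i + n) z)

def castG {a b : ℕ} (h : a = b) (x : G a) : G b := h ▸ x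

lemma castG_castG {a b c : ℕ} (h₁ : a = b) (h₂ : b = c) (x : G a) :
    castG (G := G) h₂ (castG h₁ x) = castG (h₁.trans h₂) x := by subst h₁; subst h₂; rfl

lemma p_castG {a b : ℕ} (h : a = b) (z : G (a + 1)) :
    p b (castG (by rw [h]) z) = castG h (p a z) := by subst h; rfl

lemma p_down (i : ℕ) : ∀ (n : ℕ) (z : G ((i + 1) + n)),
    p i (down p (i + 1) n z) = down p i (n + 1) (castG (by omega) z)
  | 0, z => rfl
  | n + 1, z => by
      show p i (down p (i + 1) n (p ((i+1)+n) z)) = down p i (n + 1)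
        (p (i + (n + 1)) (castG (by omega : (i+1)+(n+1) = i+(n+2)) z))
      rw [p_down i n (p ((i+1)+n) z)]
      congr 1
      have := p_castG p (show (i+1)+n = i+(n+1) by omega) z
      rw [this]

variable [∀ j, T2Space (G j)]

lemma continuous_proj (j : ℕ) : Continuous (fun x : InverseLimit G p => x.1 j) :=
  (continuous_apply j).comp continuous_subtype_val

lemma proj_isCompact_preimage (hpc : ∀ j, Continuous (p j))
    (hpp : ∀ j, ∀ K : Set (G j), IsCompact K → IsCompact (p j ⁻¹' K))
    (j : ℕ) (K : Set (G j)) (hK : IsCompact K) :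
    IsCompact ((fun x : InverseLimit G p => x.1 j) ⁻¹' K) := by
  set L : Set (G 0) := toZero p j '' K with hL
  have hLc : IsCompact L := hK.image (toZero_continuous p hpc j)
  set C : ∀ k, Set (G k) := fun k => toZero p k ⁻¹' L with hC
  have hCc : ∀ k, IsCompact (C k) := fun k => toZero_isCompact_preimage p hpp k L hLc
  have hcoh : IsClosed {x : ∀ k, G k | ∀ k, p k (x (k + 1)) = x k} := by
    have : {x : ∀ k, G k | ∀ k, p k (x (k + 1)) = x k}
        = ⋂ k, {x : ∀ k, G k | p k (x (k + 1)) = x k} := by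
      ext x; simp [Set.mem_iInter]
    rw [this]
    exact isClosed_iInter fun k =>
      isClosed_eq ((hpc k).comp (continuous_apply (k + 1))) (continuous_apply k)
  rw [Subtype.isCompact_iff]
  have himg : (Subtype.val '' ((fun x : InverseLimit G p => x.1 j) ⁻¹' K))
      = {x : ∀ k, G k | ∀ k, p k (x (k + 1)) = x k} ∩ (fun x : ∀ k, G k => x j) ⁻¹' K := by
    ext x
    constructor
    · rintro ⟨⟨y, hy⟩, hyK, rfl⟩; exact ⟨hy, hyK⟩
    · rintro ⟨hx, hxK⟩; exact ⟨⟨x, hx⟩, hxK, rfl⟩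
  rw [himg]
  have hsub : {x : ∀ k, G k | ∀ k, p k (x (k + 1)) = x k} ∩ (fun x : ∀ k, G k => x j) ⁻¹' K
      ⊆ Set.pi univ C := by
    rintro x ⟨hx, hxK⟩ k -
    show toZero p k (x k) ∈ L
    rw [toZero_coord p x hx k, ← toZero_coord p x hx j]
    exact ⟨x j, hxK, rfl⟩
  refine IsCompact.of_isClosed_subset (isCompact_univ_pi hCc) ?_ hsub
  exact hcoh.inter (hK.isClosed.preimage (continuous_apply j))

lemma tendsto_cocompact_of_isCompact_preimage {X Y : Type*} [TopologicalSpace X]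
    [TopologicalSpace Y] {f : X → Y}
    (hf : ∀ K : Set Y, IsCompact K → IsCompact (f ⁻¹' K)) :
    Tendsto f (cocompact X) (cocompact Y) := by
  intro s hs
  rw [mem_cocompact'] at hs
  rw [mem_map, mem_cocompact']
  obtain ⟨K, hK, hKs⟩ := hs
  exact ⟨f ⁻¹' K, hf K hK, fun x hx => hKs hx⟩

/-- The canonical projection as a cocompact map. -/
noncomputable def projCo (hpc : ∀ j, Continuous (p j))
    (hpp : ∀ j, ∀ K : Set (G j), IsCompact K → IsCompact (p j ⁻¹' K)) (j : ℕ) :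
    CocompactMap (InverseLimit G p) (G j) where
  toFun := fun x => x.1 j
  continuous_toFun := continuous_proj p j
  cocompact_tendsto' := tendsto_cocompact_of_isCompact_preimage
    (fun K hK => proj_isCompact_preimage p hpc hpp j K hK)

lemma proj_surjective (hps : ∀ j, Function.Surjective (p j)) (j : ℕ) :
    Function.Surjective (fun x : InverseLimit G p => x.1 j) := by
  intro y
  classical
  set s : ∀ k, G k → G (k + 1) := fun k => Function.surjInv (hps k) with hs
  have hps' : ∀ k (z : G k), p k (s k z) = z := fun k z => Function.surjInv_eq (hps k) z
  set u : ∀ n, G (j + n) := fun n => Nat.rec y (fun n un => s (j + n) un) n with hu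
  have hu0 : u 0 = y := rfl
  have husucc : ∀ n, u (n + 1) = s (j + n) (u n) := fun n => rfl
  have hpu : ∀ n, p (j + n) (u (n + 1)) = u n := fun n => hps' (j + n) (u n)
  have hdown : ∀ n, down p j n (u n) = y := by
    intro n
    induction n with
    | zero => rfl
    | succ n ih =>
        show down p j n (p (j + n) (u (n + 1))) = y
        rw [hpu n]; exact ih
  set w : ∀ k, G k := fun k => down p k j (castG (Nat.add_comm j k) (u k)) with hw
  have hcoh : ∀ k, p k (w (k + 1)) = w k := by
    intro k
    show p k (down p (k + 1) j (castG (Nat.add_comm j (k+1)) (u (k + 1)))) = w k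
    rw [p_down p k j]
    rw [castG_castG]
    show down p k j (p (k + j) (castG _ (u (k + 1)))) = w k
    have hstep : p (k + j) (castG ((Nat.add_comm j (k+1)).trans (by omega : (k+1)+j = k+(j+1)))
        (u (k + 1))) = castG (Nat.add_comm j k) (p (j + k) (u (k + 1))) :=
      p_castG p (Nat.add_comm j k) (u (k + 1))
    rw [hstep, hpu k]
  refine ⟨⟨w, hcoh⟩, ?_⟩
  show w j = y
  show down p j j (castG (Nat.add_comm j j) (u j)) = y
  have : castG (G := G) (Nat.add_comm j j) (u j) = u j := rfl
  rw [this]; exact hdown j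

end maps



section SW

variable {X : Type*} [TopologicalSpace X] [LocallyCompactSpace X] [T2Space X]

/-- Extension of a `C₀` function to the one-point compactification, by `0` at `∞`. -/
noncomputable def extOne (g : C₀(X, ℂ)) : C(OnePoint X, ℂ) :=
  OnePoint.continuousMapMk g.toContinuousMap 0
    (by rw [Filter.coclosedCompact_eq_cocompact]
        exact zero_at_infty g)

@[simp] lemma extOne_coe (g : C₀(X, ℂ)) (x : X) : extOne g x = g x := rfl

@[simp] lemma extOne_infty (g : C₀(X, ℂ)) : extOne g (OnePoint.infty) = 0 := rfl

/-- Stone–Weierstrass for `C₀` on a locally compact Hausdorff space: a self-adjoint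
subalgebra that separates points and vanishes nowhere is dense. -/
lemma dense_of_starSubalgebra (A : Set C₀(X, ℂ))
    (h0 : (0 : C₀(X, ℂ)) ∈ A)
    (hadd : ∀ a ∈ A, ∀ b ∈ A, a + b ∈ A)
    (hmul : ∀ a ∈ A, ∀ b ∈ A, a * b ∈ A)
    (hsmul : ∀ (c : ℂ), ∀ a ∈ A, c • a ∈ A)
    (hstar : ∀ a ∈ A, star a ∈ A)
    (hsep : ∀ x y : X, x ≠ y → ∃ a ∈ A, a x ≠ a y)
    (hnz : ∀ x : X, ∃ a ∈ A, a x ≠ 0) :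
    Dense A := by
  classical
  let B : StarSubalgebra ℂ C(OnePoint X, ℂ) :=
    { carrier := {h | ∃ a ∈ A, ∃ c : ℂ, h = extOne a + c • 1}
      mul_mem' := by
        rintro h₁ h₂ ⟨a, ha, c, rfl⟩ ⟨b, hb, d, rfl⟩
        refine ⟨a * b + d • a + c • b, hadd _ (hadd _ (hmul a ha b hb) _ (hsmul d a ha)) _
          (hsmul c b hb), c * d, ?_⟩
        ext y
        induction y using OnePoint.rec with
        | infty => simp
        | coe x => simp; ring
      one_mem' := ⟨0, h0, 1, by ext y; induction y using OnePoint.rec <;> simp⟩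
      add_mem' := by
        rintro h₁ h₂ ⟨a, ha, c, rfl⟩ ⟨b, hb, d, rfl⟩
        refine ⟨a + b, hadd a ha b hb, c + d, ?_⟩
        ext y
        induction y using OnePoint.rec with
        | infty => simp
        | coe x => simp; ring
      zero_mem' := ⟨0, h0, 0, by ext y; induction y using OnePoint.rec <;> simp⟩
      algebraMap_mem' := by
        intro c
        refine ⟨0, h0, c, ?_⟩
        ext y
        induction y using OnePoint.rec with
        | infty => simp [Algebra.algebraMap_eq_smul_one]
        | coe x => simp [Algebra.algebraMap_eq_smul_one]
      star_mem' := by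
        rintro h ⟨a, ha, c, rfl⟩
        refine ⟨star a, hstar a ha, starRingEnd ℂ c, ?_⟩
        ext y
        induction y using OnePoint.rec with
        | infty => simp
        | coe x => simp [ZeroAtInftyContinuousMap.star_apply, Complex.star_def] }
  have hBmem : ∀ a ∈ A, extOne a ∈ B := fun a ha => ⟨a, ha, 0, by simp⟩
  have hBsep : B.SeparatesPoints := by
    intro y₁ y₂ hne
    induction y₁ using OnePoint.rec with
    | infty =>
        induction y₂ using OnePoint.rec with
        | infty => exact absurd rfl hne
        | coe x =>
            obtain ⟨a, ha, hax⟩ := hnz x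
            exact ⟨_, ⟨extOne a, hBmem a ha, rfl⟩, by simpa using (Ne.symm hax)⟩
    | coe x =>
        induction y₂ using OnePoint.rec with
        | infty =>
            obtain ⟨a, ha, hax⟩ := hnz x
            exact ⟨_, ⟨extOne a, hBmem a ha, rfl⟩, by simpa using hax⟩
        | coe x' =>
            have hxx : x ≠ x' := fun h => hne (by rw [h])
            obtain ⟨a, ha, hax⟩ := hsep x x' hxx
            exact ⟨_, ⟨extOne a, hBmem a ha, rfl⟩, by simpa using hax⟩
  have hBtop := ContinuousMap.starSubalgebra_topologicalClosure_eq_top_of_separatesPoints B hBsep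
  have hBdense : Dense (B : Set C(OnePoint X, ℂ)) := by
    rw [dense_iff_closure_eq]
    have h1 : closure (B : Set C(OnePoint X, ℂ)) = (B.topologicalClosure : Set C(OnePoint X, ℂ)) := rfl
    rw [h1, hBtop]
    rfl
  rw [Metric.dense_iff]
  intro g r hr
  obtain ⟨h, hball, hmemB⟩ := Metric.dense_iff.mp hBdense (extOne g) (r / 2) (by positivity)
  obtain ⟨a, haA, c, rfl⟩ := hmemB
  have hdist : dist (extOne a + c • 1) (extOne g) < r / 2 := Metric.mem_ball.mp hball
  have hc : ‖c‖ ≤ dist (extOne a + c • 1) (extOne g) := by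
    have := ContinuousMap.dist_apply_le_dist (f := extOne a + c • 1) (g := extOne g)
      (OnePoint.infty)
    simpa using this
  have hga : dist a g ≤ dist (extOne a) (extOne g) := by
    rw [← ZeroAtInftyContinuousMap.dist_toBCF_eq_dist]
    refine (BoundedContinuousFunction.dist_le dist_nonneg).mpr fun x => ?_
    exact ContinuousMap.dist_apply_le_dist (f := extOne a) (g := extOne g) (x : OnePoint X)
  have h2 : dist (extOne a) (extOne g) ≤ dist (extOne a) (extOne a + c • 1)
      + dist (extOne a + c • 1) (extOne g) := dist_triangle _ _ _
  have h3 : dist (extOne a) (extOne a + c • 1) = ‖c‖ := by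
    rw [dist_eq_norm]
    simp [norm_smul]
  refine ⟨a, Metric.mem_ball.mpr ?_, haA⟩
  calc dist a g ≤ dist (extOne a) (extOne g) := hga
    _ ≤ ‖c‖ + dist (extOne a + c • 1) (extOne g) := by rw [← h3]; exact h2
    _ < r / 2 + r / 2 := add_lt_add_of_le_of_lt (hc.trans hdist.le) hdist
    _ = r := by ring

end SW

section Phi

variable [∀ j, T2Space (G j)]
variable (p : ∀ j, G (j + 1) → G j)

/-- Pullback along the canonical projection, as a non-unital star algebra homomorphism. -/
noncomputable def Phi (hpc : ∀ j, Continuous (p j))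
    (hpp : ∀ j, ∀ K : Set (G j), IsCompact K → IsCompact (p j ⁻¹' K)) (j : ℕ) :
    C₀(G j, ℂ) →⋆ₙₐ[ℂ] C₀(InverseLimit G p, ℂ) where
  toFun f := f.comp (projCo p hpc hpp j)
  map_smul' _ _ := rfl
  map_zero' := rfl
  map_add' _ _ := rfl
  map_mul' _ _ := rfl
  map_star' _ := rfl

end Phi

end InvLimSW

open InvLimSW in
/-- For an inverse sequence of locally compact Hausdorff spaces `G j` with
continuous proper bonding maps `p j` and inverse limit `Ḡ`: (a) pulling back along the
canonical projections `p_j^∞ : Ḡ → G j` yields *-homomorphisms `C₀(G j) → C₀(Ḡ)`,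
(b) the union of their ranges is dense in `C₀(Ḡ)` for the supremum norm, and (c) if
moreover every `p j` is surjective, each of these *-homomorphisms is isometric. -/
theorem inverseLimit_czero_pullback_starHom_dense_isometric
    (G : ℕ → Type*) [∀ j, TopologicalSpace (G j)]
    [∀ j, LocallyCompactSpace (G j)] [∀ j, T2Space (G j)]
    (p : ∀ j, G (j + 1) → G j) (hpc : ∀ j, Continuous (p j))
    (hpp : ∀ j, ∀ K : Set (G j), IsCompact K → IsCompact (p j ⁻¹' K)) :
    ∃ Φ : ∀ j : ℕ, C₀(G j, ℂ) →⋆ₙₐ[ℂ] C₀(InverseLimit G p, ℂ),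
      -- (a) `Φ j` is given by composition with the canonical projection:
      (∀ (j : ℕ) (f : C₀(G j, ℂ)) (x : InverseLimit G p), Φ j f x = f (x.1 j)) ∧
      -- (b) the union of the ranges is dense in the supremum norm:
      Dense (⋃ j : ℕ, Set.range (Φ j)) ∧
      -- (c) if each `p j` is surjective, then each `Φ j` is isometric:
      ((∀ j, Function.Surjective (p j)) → ∀ (j : ℕ) (f : C₀(G j, ℂ)), ‖Φ j f‖ = ‖f‖) := by
  classical
  refine ⟨Phi p hpc hpp, fun j f x => rfl, ?_, ?_⟩
  · -- density
    -- instances on the inverse limit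
    haveI : WeaklyLocallyCompactSpace (InverseLimit G p) := by
      refine ⟨fun x => ?_⟩
      obtain ⟨K, hK, hKx⟩ := exists_compact_mem_nhds (x.1 0)
      exact ⟨(fun y : InverseLimit G p => y.1 0) ⁻¹' K,
        proj_isCompact_preimage p hpc hpp 0 K hK,
        (continuous_proj p 0).continuousAt.preimage_mem_nhds hKx⟩
    haveI : LocallyCompactSpace (InverseLimit G p) :=
      WeaklyLocallyCompactSpace.locallyCompactSpace
    -- a C₀ separating function on a locally compact Hausdorff space
    have key : ∀ (j : ℕ) (z : G j) (t : Set (G j)), IsClosed t → z ∉ t →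
        ∃ f : C₀(G j, ℂ), f z = 1 ∧ ∀ w ∈ t, f w = 0 := by
      intro j z t ht hzt
      obtain ⟨f, hf1, hf0, hfc, -⟩ := exists_continuous_one_zero_of_isCompact
        (isCompact_singleton (x := z)) ht (Set.disjoint_singleton_left.mpr hzt)
      refine ⟨⟨⟨fun w => (f w : ℂ), Complex.continuous_ofReal.comp f.continuous⟩, ?_⟩, ?_, ?_⟩
      · exact (hfc.comp_left (g := fun r : ℝ => (r : ℂ)) (by simp)).is_zero_at_infty
      · show ((f z : ℝ) : ℂ) = 1
        rw [hf1 (Set.mem_singleton z)]; simp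
      · intro w hw
        show ((f w : ℝ) : ℂ) = 0
        rw [hf0 hw]; simp
    -- monotonicity of the ranges
    let Φ := Phi p hpc hpp
    have hstep : ∀ j, Set.range (Φ j) ⊆ Set.range (Φ (j + 1)) := by
      rintro j _ ⟨f, rfl⟩
      refine ⟨f.comp ⟨⟨p j, hpc j⟩, tendsto_cocompact_of_isCompact_preimage (hpp j)⟩, ?_⟩
      ext x
      exact congrArg f (x.2 j)
    have hmono : Monotone fun j => Set.range (Φ j) := monotone_nat_of_le_succ hstep
    have hmem : ∀ {a : C₀(InverseLimit G p, ℂ)} {i k : ℕ}, i ≤ k → a ∈ Set.range (Φ i) →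
        ∃ f, Φ k f = a := fun h ha => hmono h ha
    apply dense_of_starSubalgebra
    · exact Set.mem_iUnion.mpr ⟨0, 0, map_zero _⟩
    · rintro a ha b hb
      obtain ⟨i, f, rfl⟩ := by simpa [Set.mem_iUnion] using ha
      obtain ⟨k, g, rfl⟩ := by simpa [Set.mem_iUnion] using hb
      obtain ⟨f', hf'⟩ := hmem (le_max_left i k) ⟨f, rfl⟩
      obtain ⟨g', hg'⟩ := hmem (le_max_right i k) ⟨g, rfl⟩
      exact Set.mem_iUnion.mpr ⟨max i k, f' + g', by rw [map_add, hf', hg']⟩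
    · rintro a ha b hb
      obtain ⟨i, f, rfl⟩ := by simpa [Set.mem_iUnion] using ha
      obtain ⟨k, g, rfl⟩ := by simpa [Set.mem_iUnion] using hb
      obtain ⟨f', hf'⟩ := hmem (le_max_left i k) ⟨f, rfl⟩
      obtain ⟨g', hg'⟩ := hmem (le_max_right i k) ⟨g, rfl⟩
      exact Set.mem_iUnion.mpr ⟨max i k, f' * g', by rw [map_mul, hf', hg']⟩
    · rintro c a ha
      obtain ⟨i, f, rfl⟩ := by simpa [Set.mem_iUnion] using ha
      exact Set.mem_iUnion.mpr ⟨i, c • f, by rw [map_smul]⟩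
    · rintro a ha
      obtain ⟨i, f, rfl⟩ := by simpa [Set.mem_iUnion] using ha
      exact Set.mem_iUnion.mpr ⟨i, star f, by rw [map_star]⟩
    · -- separates points
      intro x y hxy
      have hne : x.1 ≠ y.1 := fun h => hxy (Subtype.ext h)
      obtain ⟨j, hj⟩ := Function.ne_iff.mp hne
      obtain ⟨f, hf1, hf0⟩ := key j (x.1 j) {y.1 j} isClosed_singleton (by simpa using hj)
      refine ⟨Φ j f, Set.mem_iUnion.mpr ⟨j, f, rfl⟩, ?_⟩
      show f (x.1 j) ≠ f (y.1 j)
      rw [hf1, hf0 (y.1 j) rfl]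
      exact one_ne_zero
    · -- vanishes nowhere
      intro x
      obtain ⟨f, hf1, -⟩ := key 0 (x.1 0) ∅ isClosed_empty (Set.notMem_empty _)
      refine ⟨Φ 0 f, Set.mem_iUnion.mpr ⟨0, f, rfl⟩, ?_⟩
      show f (x.1 0) ≠ 0
      rw [hf1]; exact one_ne_zero
  · -- isometry
    intro hps j f
    rw [← ZeroAtInftyContinuousMap.norm_toBCF_eq_norm,
      ← ZeroAtInftyContinuousMap.norm_toBCF_eq_norm]
    apply le_antisymm
    · refine (BoundedContinuousFunction.norm_le (norm_nonneg _)).mpr fun x => ?_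
      exact BoundedContinuousFunction.norm_coe_le_norm f.toBCF (x.1 j)
    · refine (BoundedContinuousFunction.norm_le (norm_nonneg _)).mpr fun y => ?_
      obtain ⟨x, hx⟩ := proj_surjective p hps j y
      calc ‖f.toBCF y‖ = ‖(Phi p hpc hpp j f).toBCF x‖ := by rw [← hx]; rfl
        _ ≤ ‖(Phi p hpc hpp j f).toBCF‖ :=
            BoundedContinuousFunction.norm_coe_le_norm _ x
end
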